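/- arXiv:0905.0008 — 2 statements merged into one kernel-verified Lean document; each statement's English description precedes it below -/
import Mathlib

section
/- The value d(D) + d(-D) does not depend on the orientation of D: for any subset S ⊆ Fin r, let D_S be the diagram obtained from D by replacing W^i by its reverse for each i ∈ S (with m unchanged); then d(D_S) + d(-D_S) = d(D) + d(-D). -/
/-- A Gauss word on `n` labels: each label occurs exactly twice,
once with flag `true` (over-passage) and once with flag `false` (under-passage). -/
def IsGaussWord {n : ℕ} (W : List (Fin n × Bool)) : Prop :=
  ∀ i : Fin n, W.count (i, true) = 1 ∧ W.count (i, false) = 1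

/-- Based warping degree: the number of labels whose first occurrence carries flag `false`. -/
def basedWd {n : ℕ} (W : List (Fin n × Bool)) : ℕ :=
  (Finset.univ.filter fun i : Fin n =>
    W.idxOf (i, false) < W.idxOf (i, true)).card

/-- Warping degree of a Gauss word: minimum of the based warping degree
over all cyclic rotations. -/
noncomputable def wd {n : ℕ} (W : List (Fin n × Bool)) : ℕ :=
  sInf {v | ∃ k : ℕ, v = basedWd (W.rotate k)}

/-- A Gauss word is alternating if the flags of consecutive entries alternate. -/
def IsAlternating {n : ℕ} (W : List (Fin n × Bool)) : Prop :=
  W.Chain' fun x y => y.2 = !x.2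

/-- Based linking warping degree for the ordering given by `σ`
(component `i` precedes `j` when `σ i < σ j`). -/
def ldSigma {r : ℕ} (m : Fin r → Fin r → ℕ) (σ : Equiv.Perm (Fin r)) : ℕ :=
  ∑ p ∈ Finset.univ.filter (fun p : Fin r × Fin r => σ p.1 < σ p.2), m p.1 p.2

/-- Linking warping degree: minimum over all orderings. -/
noncomputable def linkLd {r : ℕ} (m : Fin r → Fin r → ℕ) : ℕ :=
  sInf {v | ∃ σ : Equiv.Perm (Fin r), v = ldSigma m σ}

/-- Linking crossing number: number of non-self crossings. -/
def lcNum {r : ℕ} (m : Fin r → Fin r → ℕ) : ℕ :=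
  ∑ p ∈ Finset.univ.filter (fun p : Fin r × Fin r => p.1 ≠ p.2), m p.1 p.2

/-- Warping degree of an ordered link diagram: minimum over all orderings `σ`
and all choices of cyclic rotations (base points) of the components. -/
noncomputable def linkWd {r : ℕ} {n : Fin r → ℕ} (W : ∀ i, List (Fin (n i) × Bool))
    (m : Fin r → Fin r → ℕ) : ℕ :=
  sInf {v | ∃ (σ : Equiv.Perm (Fin r)) (k : Fin r → ℕ),
    v = (∑ i, basedWd ((W i).rotate (k i))) + ldSigma m σ}

/-- Crossing number of the link diagram. -/
def crossingNum {r : ℕ} (n : Fin r → ℕ) (m : Fin r → Fin r → ℕ) : ℕ :=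
  (∑ i, n i) + ∑ p ∈ Finset.univ.filter (fun p : Fin r × Fin r => p.1 < p.2),
    (m p.1 p.2 + m p.2 p.1)

/-- The number of components having at least one self-crossing. -/
def srNum {r : ℕ} (n : Fin r → ℕ) : ℕ :=
  (Finset.univ.filter fun i : Fin r => 1 ≤ n i).card

/-- Property C: every component word is alternating and, for each pair of distinct
components, the number of over-crossings equals the number of under-crossings. -/
def PropertyC {r : ℕ} {n : Fin r → ℕ} (W : ∀ i, List (Fin (n i) × Bool))
    (m : Fin r → Fin r → ℕ) : Prop :=
  (∀ i, IsAlternating (W i)) ∧ ∀ i j : Fin r, i ≠ j → m i j = m j i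


lemma linkWd_eq {r : ℕ} {n : Fin r → ℕ} (W : ∀ i, List (Fin (n i) × Bool))
    (m : Fin r → Fin r → ℕ) : linkWd W m = (∑ i, wd (W i)) + linkLd m := by
  apply le_antisymm
  · have hwd : ∀ i, wd (W i) ∈ {v | ∃ k : ℕ, v = basedWd ((W i).rotate k)} :=
      fun i => Nat.sInf_mem ⟨basedWd ((W i).rotate 0), 0, rfl⟩
    choose k hk using hwd
    have hld : linkLd m ∈ {v | ∃ σ : Equiv.Perm (Fin r), v = ldSigma m σ} :=
      Nat.sInf_mem ⟨ldSigma m 1, 1, rfl⟩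
    obtain ⟨σ, hσ⟩ := hld
    apply Nat.sInf_le
    exact ⟨σ, k, by rw [hσ]; congr 1; exact Finset.sum_congr rfl fun i _ => hk i⟩
  · refine le_csInf ⟨_, ⟨1, fun _ => 0, rfl⟩⟩ ?_
    rintro v ⟨σ, k, rfl⟩
    refine add_le_add (Finset.sum_le_sum fun i _ => Nat.sInf_le ⟨k i, rfl⟩)
      (Nat.sInf_le ⟨σ, rfl⟩)

/-- `d(D) + d(-D)` does not depend on the orientation of `D`. -/
theorem warping_degree_sum_orientation_independent (r : ℕ) (n : Fin r → ℕ)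
    (W : ∀ i, List (Fin (n i) × Bool)) (m : Fin r → Fin r → ℕ)
    (hW : ∀ i, IsGaussWord (W i)) (hm : ∀ i, m i i = 0) (S : Finset (Fin r)) :
    linkWd (fun i => if i ∈ S then (W i).reverse else W i) m +
      linkWd (fun i => (if i ∈ S then (W i).reverse else W i).reverse) m =
    linkWd W m + linkWd (fun i => (W i).reverse) m := by
  rw [linkWd_eq, linkWd_eq, linkWd_eq, linkWd_eq]
  have h : (∑ i, wd (if i ∈ S then (W i).reverse else W i))
      + (∑ i, wd ((if i ∈ S then (W i).reverse else W i).reverse))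
      = (∑ i, wd (W i)) + ∑ i, wd ((W i).reverse) := by
    rw [← Finset.sum_add_distrib, ← Finset.sum_add_distrib]
    refine Finset.sum_congr rfl fun i _ => ?_
    by_cases hi : i ∈ S <;> simp [hi, List.reverse_reverse, Nat.add_comm]
  omega
end

section
/- Let W be the Gauss word of a knot diagram with n ≥ 1 crossings. Then the minimal warping degree over the two orientations satisfies 2 · min(d(W), d(-W)) ≤ n − 1. -/
section Aux

open List

lemma beqconv (n : ℕ) : (instBEqProd : BEq (Fin n × Bool)) = instBEqOfDecidableEq := by
  have h1 : @LawfulBEq (Fin n × Bool) instBEqProd := inferInstance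
  have h2 : @LawfulBEq (Fin n × Bool) instBEqOfDecidableEq := @instLawfulBEq _ _
  exact @lawful_beq_subsingleton _ _ _ h1 h2

/-- `List.count` with the `DecidableEq`-derived `BEq` instance. -/
def cnt {n : ℕ} (x : Fin n × Bool) (l : List (Fin n × Bool)) : ℕ :=
  @List.count _ instBEqOfDecidableEq x l

/-- `List.indexOf` with the `DecidableEq`-derived `BEq` instance. -/
def idx {n : ℕ} (x : Fin n × Bool) (l : List (Fin n × Bool)) : ℕ :=
  @List.idxOf _ instBEqOfDecidableEq x l

lemma gauss_cnt {n : ℕ} {W : List (Fin n × Bool)} (hW : IsGaussWord W)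
    (i : Fin n) (b : Bool) : cnt (i, b) W = 1 := by
  have h1 := (hW i).1
  have h2 := (hW i).2
  rw [beqconv n] at h1 h2
  cases b
  · exact h2
  · exact h1

lemma basedWd_eq {n : ℕ} (W : List (Fin n × Bool)) :
    basedWd W = (Finset.univ.filter fun i : Fin n =>
      idx (i, false) W < idx (i, true) W).card := by
  unfold basedWd
  refine congrArg Finset.card (Finset.filter_congr fun i _ => ?_)
  rw [beqconv n]
  rfl

lemma myIndexOf_reverse {α : Type*} [DecidableEq α] {l : List α} {a : α}
    (h : l.count a = 1) :
    l.reverse.idxOf a = l.length - 1 - l.idxOf a := by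
  induction l with
  | nil => simp at h
  | cons x t ih =>
    by_cases hx : a = x
    · subst hx
      rw [List.count_cons_self] at h
      have ht : a ∉ t := by
        intro hm
        have := List.count_pos_iff.mpr hm
        omega
      have ht' : a ∉ t.reverse := by simpa using ht
      rw [List.reverse_cons, List.idxOf_append_of_notMem ht']
      simp [List.idxOf_cons_self]
    · have hxa : x ≠ a := fun hh => hx hh.symm
      rw [List.count_cons_of_ne hxa] at h
      have hm : a ∈ t := List.count_pos_iff.mp (by omega)
      have hlt : t.idxOf a < t.length := List.idxOf_lt_length_iff.mpr hm
      rw [List.reverse_cons, List.idxOf_append_of_mem (by simpa using hm),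
        List.idxOf_cons_ne _ hxa, ih h]
      simp only [List.length_reverse, List.length_cons]
      omega

lemma count_one_mem {α : Type*} [DecidableEq α] {x : α} {l : List α}
    (h : l.count x = 1) : x ∈ l :=
  List.count_pos_iff.mp (by omega)

lemma gauss_idx_lt {n : ℕ} {W : List (Fin n × Bool)} (hW : IsGaussWord W)
    (i : Fin n) (b : Bool) : idx (i, b) W < W.length := by
  unfold idx
  apply (@List.idxOf_lt_length_iff _ instBEqOfDecidableEq _ _ _).mpr
  apply count_one_mem
  have h := gauss_cnt hW i b
  unfold cnt at h
  exact h

lemma gauss_idx_ne {n : ℕ} {W : List (Fin n × Bool)} (hW : IsGaussWord W)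
    (i : Fin n) : idx (i, false) W ≠ idx (i, true) W := by
  intro h
  have h1 : W.get ⟨idx (i, false) W, gauss_idx_lt hW i false⟩ = (i, false) :=
    @List.idxOf_get _ instBEqOfDecidableEq _ _ _ _
  have h2 : W.get ⟨idx (i, true) W, gauss_idx_lt hW i true⟩ = (i, true) :=
    @List.idxOf_get _ instBEqOfDecidableEq _ _ _ _
  rw [show (⟨idx (i, false) W, gauss_idx_lt hW i false⟩ : Fin W.length)
      = ⟨idx (i, true) W, gauss_idx_lt hW i true⟩ from by simp [h]] at h1
  rw [h1] at h2
  simp at h2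

lemma basedWd_add_reverse {n : ℕ} {W : List (Fin n × Bool)} (hW : IsGaussWord W) :
    basedWd W + basedWd W.reverse = n := by
  have key : ∀ i : Fin n,
      (idx (i, false) W.reverse < idx (i, true) W.reverse
        ↔ ¬ (idx (i, false) W < idx (i, true) W)) := by
    intro i
    have e1 : idx (i, false) W.reverse = W.length - 1 - idx (i, false) W :=
      myIndexOf_reverse (gauss_cnt hW i false)
    have e2 : idx (i, true) W.reverse = W.length - 1 - idx (i, true) W :=
      myIndexOf_reverse (gauss_cnt hW i true)
    have h1 := gauss_idx_lt hW i false
    have h2 := gauss_idx_lt hW i true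
    have h3 := gauss_idx_ne hW i
    rw [e1, e2]
    omega
  rw [basedWd_eq, basedWd_eq]
  rw [show (Finset.univ.filter fun i : Fin n =>
      idx (i, false) W.reverse < idx (i, true) W.reverse)
      = (Finset.univ.filter fun i : Fin n =>
        ¬ (idx (i, false) W < idx (i, true) W)) from
    Finset.filter_congr fun i _ => by simpa using key i]
  rw [Finset.card_filter_add_card_filter_not]
  simp

lemma basedWd_le {n : ℕ} (W : List (Fin n × Bool)) : basedWd W ≤ n := by
  unfold basedWd
  calc _ ≤ (Finset.univ : Finset (Fin n)).card := Finset.card_filter_le _ _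
    _ = n := by simp

lemma gaussWord_rotate {n : ℕ} {W : List (Fin n × Bool)} (hW : IsGaussWord W) (k : ℕ) :
    IsGaussWord (W.rotate k) := by
  intro i
  have h1 := (hW i).1
  have h2 := (hW i).2
  rw [beqconv n] at h1 h2
  constructor
  · rw [beqconv n]
    exact (@List.Perm.count_eq _ instBEqOfDecidableEq _ _ (W.rotate_perm k) _).trans h1
  · rw [beqconv n]
    exact (@List.Perm.count_eq _ instBEqOfDecidableEq _ _ (W.rotate_perm k) _).trans h2

lemma filter_card_ne_of_flip {α : Type*} [DecidableEq α] [Fintype α]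
    (P Q : α → Prop) [DecidablePred P] [DecidablePred Q] (i : α)
    (hi : Q i ↔ ¬ P i) (hj : ∀ j, j ≠ i → (Q j ↔ P j)) :
    (Finset.univ.filter Q).card ≠ (Finset.univ.filter P).card := by
  by_cases hP : P i
  · have hQ : Finset.univ.filter Q = (Finset.univ.filter P).erase i := by
      ext j
      simp only [Finset.mem_filter, Finset.mem_erase, Finset.mem_univ, true_and]
      by_cases h : j = i
      · subst h; rw [hi]; tauto
      · rw [hj j h]; tauto
    have hmem : i ∈ Finset.univ.filter P := by simp [hP]
    have hpos : 0 < (Finset.univ.filter P).card := Finset.card_pos.mpr ⟨i, hmem⟩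
    rw [hQ, Finset.card_erase_of_mem hmem]
    omega
  · have hQ : Finset.univ.filter Q = insert i (Finset.univ.filter P) := by
      ext j
      simp only [Finset.mem_filter, Finset.mem_insert, Finset.mem_univ, true_and]
      by_cases h : j = i
      · subst h; rw [hi]; tauto
      · rw [hj j h]; tauto
    have hni : i ∉ Finset.univ.filter P := by simp [hP]
    rw [hQ, Finset.card_insert_of_notMem hni]
    omega

lemma count_cons_self_not_mem {α : Type*} [DecidableEq α] {x : α} {T : List α}
    (h : (x :: T).count x = 1) : x ∉ T := by
  rw [List.count_cons_self] at h
  intro hm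
  have := List.count_pos_iff.mpr hm
  omega

lemma count_cons_ne_mem {α : Type*} [DecidableEq α] {x y : α} {T : List α}
    (hxy : y ≠ x) (h : (x :: T).count y = 1) : y ∈ T := by
  rw [List.count_cons_of_ne hxy.symm] at h
  exact List.count_pos_iff.mp (by omega)

lemma basedWd_rotate_one_ne {n : ℕ} {W : List (Fin n × Bool)} (hW : IsGaussWord W)
    (hne : W ≠ []) : basedWd (W.rotate 1) ≠ basedWd W := by
  obtain ⟨x, T, rfl⟩ : ∃ x T, W = x :: T := by
    cases W with
    | nil => exact absurd rfl hne
    | cons x T => exact ⟨x, T, rfl⟩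
  obtain ⟨i, b⟩ := x
  have hrot : ((i, b) :: T).rotate 1 = T ++ [(i, b)] := by
    rw [List.rotate_cons_succ, List.rotate_zero]
  -- counts
  have h1 : @List.count _ instBEqOfDecidableEq (i, b) ((i, b) :: T) = 1 := by
    have := gauss_cnt hW i b; unfold cnt at this; exact this
  have h2 : @List.count _ instBEqOfDecidableEq (i, !b) ((i, b) :: T) = 1 := by
    have := gauss_cnt hW i (!b); unfold cnt at this; exact this
  have hnotT : (i, b) ∉ T := count_cons_self_not_mem h1
  have hinT : (i, !b) ∈ T := count_cons_ne_mem (by simp) h2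
  have hjT : ∀ (j : Fin n) (c : Bool), j ≠ i → (j, c) ∈ T := by
    intro j c hji
    have h3 : @List.count _ instBEqOfDecidableEq (j, c) ((i, b) :: T) = 1 := by
      have := gauss_cnt hW j c; unfold cnt at this; exact this
    exact count_cons_ne_mem (by simp [hji]) h3
  have hTlt : idx (i, !b) T < T.length := (@List.idxOf_lt_length_iff _ instBEqOfDecidableEq _ _ _).mpr hinT
  have eb : idx (i, b) (T ++ [(i, b)]) = T.length := by
    unfold idx
    rw [@List.idxOf_append_of_notMem _ _ _ instBEqOfDecidableEq _ _ hnotT]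
    simp [List.idxOf_cons_self]
  have enb : idx (i, !b) (T ++ [(i, b)]) = idx (i, !b) T :=
    @List.idxOf_append_of_mem _ _ _ instBEqOfDecidableEq _ _ hinT
  have ecs : idx (i, b) ((i, b) :: T) = 0 := @List.idxOf_cons_self _ _ instBEqOfDecidableEq _ _
  have ecn : idx (i, !b) ((i, b) :: T) = idx (i, !b) T + 1 :=
    @List.idxOf_cons_ne _ instBEqOfDecidableEq _ _ _ _ (by simp)
  rw [basedWd_eq, basedWd_eq, hrot]
  apply filter_card_ne_of_flip _ _ i
  · -- flip at i
    show idx (i, false) (T ++ [(i, b)]) < idx (i, true) (T ++ [(i, b)])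
      ↔ ¬ (idx (i, false) ((i, b) :: T) < idx (i, true) ((i, b) :: T))
    rcases b
    · simp only [Bool.not_false] at enb ecn hTlt
      rw [eb, enb, ecs, ecn]
      omega
    · simp only [Bool.not_true] at enb ecn hTlt
      rw [eb, enb, ecs, ecn]
      omega
  · -- other labels
    intro j hji
    show idx (j, false) (T ++ [(i, b)]) < idx (j, true) (T ++ [(i, b)])
      ↔ idx (j, false) ((i, b) :: T) < idx (j, true) ((i, b) :: T)
    have e1 : idx (j, false) (T ++ [(i, b)]) = idx (j, false) T :=
      @List.idxOf_append_of_mem _ _ _ instBEqOfDecidableEq _ _ (hjT j false hji)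
    have e2 : idx (j, true) (T ++ [(i, b)]) = idx (j, true) T :=
      @List.idxOf_append_of_mem _ _ _ instBEqOfDecidableEq _ _ (hjT j true hji)
    have e3 : idx (j, false) ((i, b) :: T) = idx (j, false) T + 1 :=
      @List.idxOf_cons_ne _ instBEqOfDecidableEq _ _ _ _ (by simp [Ne.symm hji])
    have e4 : idx (j, true) ((i, b) :: T) = idx (j, true) T + 1 :=
      @List.idxOf_cons_ne _ instBEqOfDecidableEq _ _ _ _ (by simp [Ne.symm hji])
    rw [e1, e2, e3, e4]
    omega

end Aux

/-- `2 · min(d(W), d(-W)) ≤ n - 1` for a knot diagram with `n ≥ 1` crossings. -/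
theorem two_min_wd_le (n : ℕ) (hn : 1 ≤ n) (W : List (Fin n × Bool))
    (hW : IsGaussWord W) :
    2 * min (wd W) (wd W.reverse) ≤ n - 1 := by
  classical
  -- W is nonempty
  have hmem : ((⟨0, hn⟩ : Fin n), true) ∈ W :=
    List.count_pos_iff.mp (by rw [(hW ⟨0, hn⟩).1]; omega)
  have hne : W ≠ [] := by rintro rfl; simp at hmem
  set A := basedWd W with hA
  set B := basedWd (W.rotate 1) with hB
  have hAB : B ≠ A := basedWd_rotate_one_ne hW hne
  have hAn : A ≤ n := basedWd_le W
  have hBn : B ≤ n := basedWd_le (W.rotate 1)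
  -- wd W bounds
  have h1 : wd W ≤ A := Nat.sInf_le ⟨0, by rw [List.rotate_zero]⟩
  have h2 : wd W ≤ B := Nat.sInf_le ⟨1, rfl⟩
  -- wd W.reverse bounds
  have hrev : ∀ k : ℕ, wd W.reverse ≤ n - basedWd (W.rotate k) := by
    intro k
    have hcompl := basedWd_add_reverse (gaussWord_rotate hW k)
    have hmem2 : n - basedWd (W.rotate k) ∈
        {v | ∃ m : ℕ, v = basedWd (W.reverse.rotate m)} := by
      refine ⟨W.length - k % W.length, ?_⟩
      rw [← List.reverse_rotate]
      omega
    exact Nat.sInf_le hmem2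
  have h3 : wd W.reverse ≤ n - A := by
    have := hrev 0; rwa [List.rotate_zero] at this
  have h4 : wd W.reverse ≤ n - B := hrev 1
  have hm1 : min (wd W) (wd W.reverse) ≤ wd W := min_le_left _ _
  have hm2 : min (wd W) (wd W.reverse) ≤ wd W.reverse := min_le_right _ _
  omega
end
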